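/- Let γ ≠ 0 and κ, A, C, D ∈ ℝ, and let P¹(α,β) := −(3/(8π)) sin²β cos(2α). Then there exist unique real constants C₁, C₂, C₃ such that the function P²(α,β) := C₁ sin⁴β cos(4α) + C₂ sin²β cos(2α) + C₃ sin²β sin(2α) satisfies, for all α ∈ ℝ and all β ∈ (0,π), the order-B² equation 0 = (γ/2) sin(2α) sin β cos β ∂_β P¹ − (3γ/2) sin(2α) sin²β P¹ + (γ/2) ∂_α P² + (γ/2) cos(2α) ∂_α P¹ + κ ( A sin²β cos(2α) + C sin²β sin(2α) ) + 12 κ D sin²β sin(2α); moreover the coefficient of sin²β sin(2α) is C₃ = −κA/γ. -/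

import Mathlib

open Real

/-- The first-order (in the Bretherton constant) correction to the orientation
distribution: `P¹(α,β) = −(3/(8π)) sin²β cos(2α)`. -/
noncomputable def P1 (α β : ℝ) : ℝ :=
  -(3 / (8 * Real.pi)) * Real.sin β ^ 2 * Real.cos (2 * α)

/-- The second-order ansatz
`P²(α,β) = C₁ sin⁴β cos(4α) + C₂ sin²β cos(2α) + C₃ sin²β sin(2α)` with
coefficients `c = (C₁, C₂, C₃)`. -/
noncomputable def P2 (c : ℝ × ℝ × ℝ) (α β : ℝ) : ℝ :=
  c.1 * Real.sin β ^ 4 * Real.cos (4 * α)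
    + c.2.1 * Real.sin β ^ 2 * Real.cos (2 * α)
    + c.2.2 * Real.sin β ^ 2 * Real.sin (2 * α)

/-- The order-`B²` equation of the steady-state kinetic hierarchy, as a
condition on the coefficient triple `c = (C₁, C₂, C₃)`. -/
noncomputable def OrderB2Eq (γ κ A C D : ℝ) (c : ℝ × ℝ × ℝ) : Prop :=
  ∀ α : ℝ, ∀ β ∈ Set.Ioo (0 : ℝ) Real.pi,
    (0 : ℝ) =
      γ / 2 * Real.sin (2 * α) * Real.sin β * Real.cos β
          * deriv (fun b => P1 α b) β
        - 3 * γ / 2 * Real.sin (2 * α) * Real.sin β ^ 2 * P1 α β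
        + γ / 2 * deriv (fun a => P2 c a β) α
        + γ / 2 * Real.cos (2 * α) * deriv (fun a => P1 a β) α
        + κ * (A * Real.sin β ^ 2 * Real.cos (2 * α)
            + C * Real.sin β ^ 2 * Real.sin (2 * α))
        + 12 * κ * D * Real.sin β ^ 2 * Real.sin (2 * α)

lemma deriv_P1_beta (α β : ℝ) :
    deriv (fun b => P1 α b) β = -(3 / (4 * Real.pi)) * Real.sin β * Real.cos β * Real.cos (2 * α) := by
  have h : HasDerivAt (fun b => P1 α b)
      (-(3 / (8 * Real.pi)) * (2 * Real.sin β * Real.cos β) * Real.cos (2 * α)) β := by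
    unfold P1
    have h1 : HasDerivAt (fun b : ℝ => Real.sin b ^ 2) (2 * Real.sin β ^ 1 * Real.cos β) β :=
      (Real.hasDerivAt_sin β).pow 2
    simpa [mul_comm, mul_assoc, mul_left_comm] using
      (h1.const_mul (-(3 / (8 * Real.pi)))).mul_const (Real.cos (2 * α))
  rw [h.deriv]; ring

lemma deriv_P1_alpha (α β : ℝ) :
    deriv (fun a => P1 a β) α = 3 / (4 * Real.pi) * Real.sin β ^ 2 * Real.sin (2 * α) := by
  have hc : HasDerivAt (fun a : ℝ => Real.cos (2 * a)) (-Real.sin (2 * α) * 2) α := by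
    simpa [Function.comp_def] using (Real.hasDerivAt_cos (2 * α)).comp α ((hasDerivAt_id α).const_mul 2)
  have h : HasDerivAt (fun a => P1 a β)
      (-(3 / (8 * Real.pi)) * Real.sin β ^ 2 * (-Real.sin (2 * α) * 2)) α := by
    unfold P1
    exact hc.const_mul _
  rw [h.deriv]; ring

lemma deriv_P2_alpha (c : ℝ × ℝ × ℝ) (α β : ℝ) :
    deriv (fun a => P2 c a β) α =
      -4 * c.1 * Real.sin β ^ 4 * Real.sin (4 * α)
        - 2 * c.2.1 * Real.sin β ^ 2 * Real.sin (2 * α)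
        + 2 * c.2.2 * Real.sin β ^ 2 * Real.cos (2 * α) := by
  have h4 : HasDerivAt (fun a : ℝ => Real.cos (4 * a)) (-Real.sin (4 * α) * 4) α := by
    simpa [Function.comp_def] using (Real.hasDerivAt_cos (4 * α)).comp α ((hasDerivAt_id α).const_mul 4)
  have hc2 : HasDerivAt (fun a : ℝ => Real.cos (2 * a)) (-Real.sin (2 * α) * 2) α := by
    simpa [Function.comp_def] using (Real.hasDerivAt_cos (2 * α)).comp α ((hasDerivAt_id α).const_mul 2)
  have hs2 : HasDerivAt (fun a : ℝ => Real.sin (2 * a)) (Real.cos (2 * α) * 2) α := by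
    simpa [Function.comp_def] using (Real.hasDerivAt_sin (2 * α)).comp α ((hasDerivAt_id α).const_mul 2)
  have h : HasDerivAt (fun a => P2 c a β)
      (c.1 * Real.sin β ^ 4 * (-Real.sin (4 * α) * 4)
        + c.2.1 * Real.sin β ^ 2 * (-Real.sin (2 * α) * 2)
        + c.2.2 * Real.sin β ^ 2 * (Real.cos (2 * α) * 2)) α := by
    unfold P2
    exact ((h4.const_mul _).add (hc2.const_mul _)).add (hs2.const_mul _)
  rw [h.deriv]; ring

/-- The big right-hand side, rewritten as an explicit trigonometric polynomial. -/
lemma rhs_eq (γ κ A C D : ℝ) (c : ℝ × ℝ × ℝ) (α β : ℝ) :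
    γ / 2 * Real.sin (2 * α) * Real.sin β * Real.cos β
          * deriv (fun b => P1 α b) β
        - 3 * γ / 2 * Real.sin (2 * α) * Real.sin β ^ 2 * P1 α β
        + γ / 2 * deriv (fun a => P2 c a β) α
        + γ / 2 * Real.cos (2 * α) * deriv (fun a => P1 a β) α
        + κ * (A * Real.sin β ^ 2 * Real.cos (2 * α)
            + C * Real.sin β ^ 2 * Real.sin (2 * α))
        + 12 * κ * D * Real.sin β ^ 2 * Real.sin (2 * α)
      = (15 * γ / (32 * Real.pi) - 2 * γ * c.1) * Real.sin β ^ 4 * Real.sin (4 * α)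
        + (γ * c.2.2 + κ * A) * Real.sin β ^ 2 * Real.cos (2 * α)
        + (-(γ * c.2.1) + κ * C + 12 * κ * D) * Real.sin β ^ 2 * Real.sin (2 * α) := by
  rw [deriv_P1_beta, deriv_P1_alpha, deriv_P2_alpha]
  have h4 : Real.sin (4 * α) = 2 * Real.sin (2 * α) * Real.cos (2 * α) := by
    rw [show (4 : ℝ) * α = 2 * (2 * α) by ring, Real.sin_two_mul]
  have hc : Real.cos β ^ 2 = 1 - Real.sin β ^ 2 := Real.cos_sq' β
  have hπ : Real.pi ≠ 0 := Real.pi_ne_zero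
  unfold P1
  linear_combination (-(15 * γ / (32 * Real.pi)) * Real.sin β ^ 4) * h4
    + (-(3 * γ / (8 * Real.pi)) * Real.sin (2 * α) * Real.cos (2 * α) * Real.sin β ^ 2) * hc

/-- For `γ ≠ 0` there are unique constants `C₁, C₂, C₃` such
that the ansatz `P²` solves the order-`B²` equation; moreover the coefficient
of `sin²β sin(2α)` is `C₃ = −κA/γ`. -/
theorem orderB2_unique_coefficients (γ κ A C D : ℝ) (hγ : γ ≠ 0) :
    (∃! c : ℝ × ℝ × ℝ, OrderB2Eq γ κ A C D c)
    ∧ (∀ c : ℝ × ℝ × ℝ, OrderB2Eq γ κ A C D c → c.2.2 = -(κ * A) / γ) := by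
  have hπ : Real.pi ≠ 0 := Real.pi_ne_zero
  set c₀ : ℝ × ℝ × ℝ := (15 / (64 * Real.pi), κ * (C + 12 * D) / γ, -(κ * A) / γ) with hc₀
  have hsol : OrderB2Eq γ κ A C D c₀ := by
    intro α β _
    rw [rhs_eq]
    simp only [hc₀]
    field_simp
    ring
  -- uniqueness helper: if OrderB2Eq holds, the three coefficients vanish
  have key : ∀ c : ℝ × ℝ × ℝ, OrderB2Eq γ κ A C D c → c = c₀ := by
    intro c hc
    have hmem : Real.pi / 2 ∈ Set.Ioo (0 : ℝ) Real.pi :=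
      ⟨by positivity, by linarith [Real.pi_pos]⟩
    have hsin : Real.sin (Real.pi / 2) = 1 := Real.sin_pi_div_two
    have h0 := hc 0 (Real.pi / 2) hmem
    have h1 := hc (Real.pi / 4) (Real.pi / 2) hmem
    have h2 := hc (Real.pi / 8) (Real.pi / 2) hmem
    rw [rhs_eq] at h0 h1 h2
    simp only [hsin, mul_zero, Real.sin_zero, Real.cos_zero, one_pow, mul_one] at h0 h1 h2
    rw [show (2 : ℝ) * (Real.pi / 4) = Real.pi / 2 by ring,
        show (4 : ℝ) * (Real.pi / 4) = Real.pi by ring,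
        Real.sin_pi, Real.sin_pi_div_two, Real.cos_pi_div_two] at h1
    rw [show (2 : ℝ) * (Real.pi / 8) = Real.pi / 4 by ring,
        show (4 : ℝ) * (Real.pi / 8) = Real.pi / 2 by ring,
        Real.sin_pi_div_two, Real.sin_pi_div_four, Real.cos_pi_div_four] at h2
    have hA : γ * c.2.2 + κ * A = 0 := by linarith
    have hB : -(γ * c.2.1) + κ * C + 12 * κ * D = 0 := by linarith
    have hC1 : 15 * γ / (32 * Real.pi) - 2 * γ * c.1 = 0 := by
      linear_combination -h2 - (Real.sqrt 2 / 2) * hA - (Real.sqrt 2 / 2) * hB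
    have e3 : c.2.2 = -(κ * A) / γ := by
      rw [eq_div_iff hγ]; linear_combination hA
    have e2 : c.2.1 = κ * (C + 12 * D) / γ := by
      rw [eq_div_iff hγ]; linear_combination -hB
    have e1 : c.1 = 15 / (64 * Real.pi) := by
      have hz : γ * (c.1 - 15 / (64 * Real.pi)) = 0 := by
        linear_combination (-(1 : ℝ) / 2) * hC1
      rcases mul_eq_zero.mp hz with h | h
      · exact absurd h hγ
      · linarith [sub_eq_zero.mp h]
    exact Prod.ext e1 (Prod.ext e2 e3)
  refine ⟨⟨c₀, hsol, fun c hc => key c hc⟩, fun c hc => ?_⟩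
  rw [key c hc]
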